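/- Let S be an abelian group of commuting unitary self-adjoint operators on V not containing -1, stabilizing a subspace Q, and let t₁, t₂ be unitary operators such that t₁† t₂ anticommutes with some element of S. Then t₁(Q) and t₂(Q) are mutually orthogonal subspaces. -/

import Mathlib

/-- Let `S` be an abelian group of commuting unitary self-adjoint operators on `V` not
containing `-1`, stabilizing `Q = {ψ : sψ = ψ for all s ∈ S}`, and let `t₁, t₂` be
unitary operators such that `t₁† t₂` anticommutes with some element of `S`.  Then
`t₁(Q)` and `t₂(Q)` are mutually orthogonal. -/
theorem stmt_11 {V : Type*} [NormedAddCommGroup V] [InnerProductSpace ℂ V]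
    [FiniteDimensional ℂ V] (S : Set (V →ₗ[ℂ] V))
    (hsa : ∀ s ∈ S, LinearMap.adjoint s = s)
    (hu : ∀ s ∈ S, LinearMap.adjoint s * s = 1)
    (hcomm : ∀ s ∈ S, ∀ s' ∈ S, s * s' = s' * s)
    (hmul : ∀ s ∈ S, ∀ s' ∈ S, s * s' ∈ S)
    (hone : (1 : V →ₗ[ℂ] V) ∈ S)
    (hneg : (-1 : V →ₗ[ℂ] V) ∉ S)
    (t₁ t₂ : V →ₗ[ℂ] V)
    (ht₁ : LinearMap.adjoint t₁ * t₁ = 1) (ht₂ : LinearMap.adjoint t₂ * t₂ = 1)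
    (hanti : ∃ s ∈ S, (LinearMap.adjoint t₁ * t₂) * s = -(s * (LinearMap.adjoint t₁ * t₂))) :
    ∀ ψ ∈ {ψ : V | ∀ s ∈ S, s ψ = ψ}, ∀ φ ∈ {ψ : V | ∀ s ∈ S, s ψ = ψ},
      (inner ℂ (t₁ ψ) (t₂ φ) : ℂ) = 0 := by
  intro ψ hψ φ hφ
  obtain ⟨s, hsS, hs⟩ := hanti
  set u := LinearMap.adjoint t₁ * t₂ with hu_def
  have key : (inner ℂ (t₁ ψ) (t₂ φ) : ℂ) = inner ℂ ψ (u φ) := by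
    rw [hu_def, Module.End.mul_apply, ← LinearMap.adjoint_inner_right]
  have hsφ : s φ = φ := hφ s hsS
  have hsψ : s ψ = ψ := hψ s hsS
  have hneg' : (inner ℂ ψ (u φ) : ℂ) = - inner ℂ ψ (u φ) := by
    conv_lhs => rw [← hsφ, ← Module.End.mul_apply, hs]
    rw [LinearMap.neg_apply, inner_neg_right, Module.End.mul_apply,
      ← LinearMap.adjoint_inner_left, hsa s hsS, hsψ]
  have : (inner ℂ ψ (u φ) : ℂ) = 0 := by linear_combination hneg' / 2
  rw [key, this]
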